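/- Loopless multigraph construction step: Let (d_1, d_2 ≥ d_3 ≥ ... ≥ d_n) be a sequence of nonnegative integers with d_1 > 0 and d_2 the maximum among d_2,...,d_n. Then (d_1,...,d_n) is multigraphical if and only if (d_1 − 1, d_2 − 1, d_3, ..., d_n) is multigraphical. -/
import Mathlib

/-- Degree of vertex `v` in a loopless multigraph given as a multiset of edges. -/
def mdeg {n : ℕ} (M : Multiset (Sym2 (Fin n))) (v : Fin n) : ℕ :=
  Multiset.countP (fun e => v ∈ e) M

/-- An integer sequence is multigraphical if some loopless multigraph
(parallel edges allowed, no self-loops) realizes it as its degree sequence. -/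
def MultigraphicalZ {m : ℕ} (d : Fin m → ℤ) : Prop :=
  ∃ M : Multiset (Sym2 (Fin m)), (∀ e ∈ M, ¬ e.IsDiag) ∧ ∀ v, (mdeg M v : ℤ) = d v

lemma countP_mono' {α : Type*} {p q : α → Prop} [DecidablePred p] [DecidablePred q]
    (s : Multiset α) (h : ∀ a ∈ s, p a → q a) :
    Multiset.countP p s ≤ Multiset.countP q s := by
  induction s using Multiset.induction with
  | empty => simp
  | cons a s ih =>
    rw [Multiset.countP_cons, Multiset.countP_cons]
    have h1 : ∀ b ∈ s, p b → q b := fun b hb => h b (Multiset.mem_cons_of_mem hb)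
    have h2 := h a (Multiset.mem_cons_self a s)
    have h3 := ih h1
    split_ifs with hp hq hq
    · omega
    · exact absurd (h2 hp) hq
    · omega
    · omega

lemma mdeg_cons {n : ℕ} (a : Sym2 (Fin n)) (M : Multiset (Sym2 (Fin n))) (v : Fin n) :
    mdeg (a ::ₘ M) v = (if v ∈ a then 1 else 0) + mdeg M v := by
  simp only [mdeg, Multiset.countP_cons]
  omega

lemma mdeg_erase {n : ℕ} {a : Sym2 (Fin n)} {M : Multiset (Sym2 (Fin n))} (h : a ∈ M)
    (v : Fin n) :
    mdeg M v = (if v ∈ a then 1 else 0) + mdeg (M.erase a) v := by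
  conv_lhs => rw [← Multiset.cons_erase h]
  exact mdeg_cons a (M.erase a) v

/-- Loopless multigraph construction step: for `(d 0, d 1 ≥ d 2 ≥ ... ≥ d (n+1))`
with `d 0 > 0` and `d 1` maximal among the entries after the first, the sequence
is multigraphical iff the sequence with the first two entries decremented is. -/
theorem stmt8 {n : ℕ} (d : Fin (n + 2) → ℤ) (hnn : ∀ i, 0 ≤ d i)
    (h0 : 0 < d 0)
    (hsort : ∀ i j : Fin (n + 2), 1 ≤ i → i ≤ j → d j ≤ d i) :
    MultigraphicalZ d ↔
      MultigraphicalZ (fun i => if i = 0 then d 0 - 1 else if i = 1 then d 1 - 1 else d i) := by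
  have h01 : (0 : Fin (n + 2)) ≠ 1 := Fin.ne_of_val_ne (by simp)
  constructor
  · rintro ⟨M, hdiag, hdeg⟩
    by_cases hM01 : s((0 : Fin (n+2)), (1 : Fin (n+2))) ∈ M
    · -- just erase the edge 0-1
      refine ⟨M.erase s(0, 1), fun e he => hdiag e (Multiset.mem_of_mem_erase he), fun v => ?_⟩
      have hE := mdeg_erase hM01 v
      have hv := hdeg v
      beta_reduce
      by_cases hv0 : v = 0
      · subst hv0
        rw [if_pos (Sym2.mem_iff.mpr (Or.inl rfl))] at hE
        rw [if_pos rfl]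
        omega
      · by_cases hv1 : v = 1
        · subst hv1
          rw [if_pos (Sym2.mem_iff.mpr (Or.inr rfl))] at hE
          rw [if_neg hv0, if_pos rfl]
          omega
        · rw [if_neg (by simp [Sym2.mem_iff, hv0, hv1])] at hE
          rw [if_neg hv0, if_neg hv1]
          omega
    · -- find an edge 0-x with x ≠ 0, 1
      have hpos : 0 < mdeg M 0 := by
        have := hdeg 0
        omega
      obtain ⟨e, heM, he0⟩ := Multiset.countP_pos.mp hpos
      obtain ⟨x, rfl⟩ := Sym2.mem_iff_exists.mp he0
      have hx0 : x ≠ 0 := by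
        intro h; apply hdiag _ heM; rw [h]; exact Sym2.mk_isDiag_iff.mpr rfl
      have hx1 : x ≠ 1 := by
        rintro rfl; exact hM01 heM
      set M₁ := M.erase s((0 : Fin (n+2)), x) with hM₁
      -- degree bookkeeping for the erased edge
      have hd1 : mdeg M 1 = mdeg M₁ 1 := by
        have := mdeg_erase heM 1
        rw [← hM₁, if_neg (by simp [Sym2.mem_iff, h01.symm, Ne.symm hx1])] at this
        omega
      have hdx : mdeg M x = 1 + mdeg M₁ x := by
        have := mdeg_erase heM x
        rw [← hM₁, if_pos (Sym2.mem_iff.mpr (Or.inr rfl))] at this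
        omega
      have hd1x : (mdeg M x : ℤ) ≤ mdeg M 1 := by
        rw [hdeg x, hdeg 1]
        refine hsort 1 x ?_ ?_
        · exact le_refl 1
        · rw [Fin.le_def, Fin.val_one]
          have hxv : x.val ≠ 0 := fun h => hx0 (Fin.ext h)
          omega
      -- find an edge 1-y in M₁ with y ≠ x
      have hexists : ∃ f ∈ M₁, (1 : Fin (n+2)) ∈ f ∧ f ≠ s((1 : Fin (n+2)), x) := by
        by_contra hc
        push_neg at hc
        have hle : mdeg M₁ 1 ≤ mdeg M₁ x := by
          refine countP_mono' M₁ ?_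
          intro a ha h1a
          rw [hc a ha h1a]
          exact Sym2.mem_iff.mpr (Or.inr rfl)
        omega
      obtain ⟨f, hfM₁, h1f, hfne⟩ := hexists
      obtain ⟨y, rfl⟩ := Sym2.mem_iff_exists.mp h1f
      have hy1 : y ≠ 1 := by
        intro h
        apply hdiag _ (Multiset.mem_of_mem_erase hfM₁)
        rw [h]; exact Sym2.mk_isDiag_iff.mpr rfl
      have hyx : y ≠ x := by rintro rfl; exact hfne rfl
      have hy0 : y ≠ 0 := by
        rintro rfl
        apply hM01
        have := Multiset.mem_of_mem_erase hfM₁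
        rwa [Sym2.eq_swap] at this
      -- the swapped multigraph
      set M₂ := M₁.erase s((1 : Fin (n+2)), y) with hM₂
      refine ⟨s(x, y) ::ₘ M₂, ?_, ?_⟩
      · intro e he
        rcases Multiset.mem_cons.mp he with rfl | he
        · rw [Sym2.mk_isDiag_iff]; exact Ne.symm hyx
        · exact hdiag _ (Multiset.mem_of_mem_erase (Multiset.mem_of_mem_erase he))
      · intro v
        have hE1 := mdeg_erase heM v
        rw [← hM₁] at hE1
        have hE2 := mdeg_erase hfM₁ v
        rw [← hM₂] at hE2
        have hE3 := mdeg_cons s(x, y) M₂ v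
        have hv := hdeg v
        beta_reduce
        by_cases hv0 : v = 0
        · subst hv0
          rw [if_pos (Sym2.mem_iff.mpr (Or.inl rfl))] at hE1
          rw [if_neg (by simp [Sym2.mem_iff, h01, Ne.symm hy0])] at hE2
          rw [if_neg (by simp [Sym2.mem_iff, Ne.symm hx0, Ne.symm hy0])] at hE3
          rw [if_pos rfl]
          omega
        · by_cases hv1 : v = 1
          · subst hv1
            rw [if_neg (by simp [Sym2.mem_iff, h01.symm, Ne.symm hx1])] at hE1
            rw [if_pos (Sym2.mem_iff.mpr (Or.inl rfl))] at hE2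
            rw [if_neg (by simp [Sym2.mem_iff, Ne.symm hx1, Ne.symm hy1])] at hE3
            rw [if_neg hv0, if_pos rfl]
            omega
          · rw [if_neg hv0, if_neg hv1]
            by_cases hvx : v = x
            · have hvy : v ≠ y := by rintro rfl; exact hyx hvx
              rw [if_pos (Sym2.mem_iff.mpr (Or.inr hvx))] at hE1
              rw [if_neg (by simp [Sym2.mem_iff, hv1, hvy])] at hE2
              rw [if_pos (Sym2.mem_iff.mpr (Or.inl hvx))] at hE3
              omega
            · by_cases hvy : v = y
              · rw [if_neg (by simp [Sym2.mem_iff, hv0, hvx])] at hE1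
                rw [if_pos (Sym2.mem_iff.mpr (Or.inr hvy))] at hE2
                rw [if_pos (Sym2.mem_iff.mpr (Or.inr hvy))] at hE3
                omega
              · rw [if_neg (by simp [Sym2.mem_iff, hv0, hvx])] at hE1
                rw [if_neg (by simp [Sym2.mem_iff, hv1, hvy])] at hE2
                rw [if_neg (by simp [Sym2.mem_iff, hvx, hvy])] at hE3
                omega
  · rintro ⟨M, hdiag, hdeg⟩
    refine ⟨s((0 : Fin (n+2)), 1) ::ₘ M, ?_, ?_⟩
    · intro e he
      rcases Multiset.mem_cons.mp he with rfl | he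
      · rw [Sym2.mk_isDiag_iff]; exact h01
      · exact hdiag _ he
    · intro v
      have hE := mdeg_cons s((0 : Fin (n+2)), 1) M v
      have hv := hdeg v
      beta_reduce at hv
      by_cases hv0 : v = 0
      · subst hv0
        rw [if_pos (Sym2.mem_iff.mpr (Or.inl rfl))] at hE
        rw [if_pos rfl] at hv
        omega
      · by_cases hv1 : v = 1
        · subst hv1
          rw [if_pos (Sym2.mem_iff.mpr (Or.inr rfl))] at hE
          rw [if_neg hv0, if_pos rfl] at hv
          omega
        · rw [if_neg (by simp [Sym2.mem_iff, hv0, hv1])] at hE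
          rw [if_neg hv0, if_neg hv1] at hv
          omega
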